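/- Discrete self-duality of e ∪ ē: with e = Σ_k (e₁^k + e₂^k 𝐢 + e₃^k 𝐣 + e₄^k 𝐤), the 2-form e ∪ ē equals -2[(ε₁₂+ε₃₄)𝐢 + (ε₁₃-ε₂₄)𝐣 + (ε₁₄+ε₂₃)𝐤], and this 2-form is self-dual: ∗ι̃(e ∪ ē) = e ∪ ē. -/

import Mathlib

/-- The quaternionic units `1, 𝐢, 𝐣, 𝐤` appearing as the coefficients of the
1-form `e = e₁ + e₂𝐢 + e₃𝐣 + e₄𝐤`. -/
noncomputable def qu : Fin 4 → Quaternion ℝ :=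
  ![1, ⟨0, 1, 0, 0⟩, ⟨0, 0, 1, 0⟩, ⟨0, 0, 0, 1⟩]

/-- The quaternionic component of the 2-form `e ∪ ē` on `ε_{ij}` (`i < j`):
since `e_i ∪ e_j = ε_{ij}` and `e_j ∪ e_i = -ε_{ij}`, it is
`u_i·conj(u_j) - u_j·conj(u_i)`. -/
noncomputable def eCupEbar (i j : Fin 4) : Quaternion ℝ :=
  qu i * star (qu j) - qu j * star (qu i)

/-- Discrete self-duality of `e ∪ ē`: the 2-form `e ∪ ē` equals
`-2[(ε₁₂+ε₃₄)𝐢 + (ε₁₃-ε₂₄)𝐣 + (ε₁₄+ε₂₃)𝐤]`, i.e. its components are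
`F^{12} = F^{34} = -2𝐢`, `F^{13} = -2𝐣`, `F^{24} = 2𝐣`, `F^{14} = F^{23} = -2𝐤`,
and these satisfy the self-duality relations `∗ι̃(e ∪ ē) = e ∪ ē`, i.e.
`F^{12} = F^{34}`, `F^{13} = -F^{24}`, `F^{14} = F^{23}`. -/
theorem eCupEbar_selfDual :
    (eCupEbar 0 1 = ⟨0, -2, 0, 0⟩ ∧ eCupEbar 2 3 = ⟨0, -2, 0, 0⟩ ∧
     eCupEbar 0 2 = ⟨0, 0, -2, 0⟩ ∧ eCupEbar 1 3 = ⟨0, 0, 2, 0⟩ ∧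
     eCupEbar 0 3 = ⟨0, 0, 0, -2⟩ ∧ eCupEbar 1 2 = ⟨0, 0, 0, -2⟩) ∧
    (eCupEbar 0 1 = eCupEbar 2 3 ∧ eCupEbar 0 2 = - eCupEbar 1 3 ∧
     eCupEbar 0 3 = eCupEbar 1 2) := by
  refine ⟨⟨?_, ?_, ?_, ?_, ?_, ?_⟩, ?_, ?_, ?_⟩ <;>
    · ext <;> simp only [eCupEbar, Quaternion.re_sub, Quaternion.imI_sub, Quaternion.imJ_sub, Quaternion.imK_sub, Quaternion.re_neg, Quaternion.imI_neg, Quaternion.imJ_neg, Quaternion.imK_neg, Quaternion.re_mul, Quaternion.imI_mul, Quaternion.imJ_mul, Quaternion.imK_mul, Quaternion.re_star, Quaternion.imI_star, Quaternion.imJ_star, Quaternion.imK_star] <;>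
      simp [qu, Quaternion.re_one, Quaternion.imI_one, Quaternion.imJ_one, Quaternion.imK_one] <;> norm_num
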